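/- Let Σ be a 2N×2N real matrix with mode-ordered correlation blocks σ_jk. Suppose there exist real 2×2 matrices S₁,…,S_N each of determinant 1, a function λ : {1,…,N} → ℝ with λ_j > 0 for all j, a symmetric real N×N matrix V, and real numbers c_jk, such that for all j ≠ k one has S_j · σ_jk · S_kᵀ = [[0, λ_j V_jk],[λ_k V_jk, c_jk]] (i.e. the GLU-transformed state is a valid Gaussian graph state, with diagonal U). Then det(σ_jk) ≤ 0 for all j ≠ k. -/
import Mathlib


open Matrix

/-- The mode-ordered 2×2 correlation block `σ_jk` of a quadrature-ordered covariance
matrix: it collects the `(Q_j,P_j)–(Q_k,P_k)` covariances. -/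
def modeBlock {N : ℕ} (A : Matrix (Fin N ⊕ Fin N) (Fin N ⊕ Fin N) ℝ) (j k : Fin N) :
    Matrix (Fin 2) (Fin 2) ℝ :=
  !![A (Sum.inl j) (Sum.inl k), A (Sum.inl j) (Sum.inr k);
     A (Sum.inr j) (Sum.inl k), A (Sum.inr j) (Sum.inr k)]

/-- if the mode-ordered blocks of `Σ` are carried by GLUs `S_j`
(real 2×2 matrices of determinant 1) to the graph-state form
`S_j σ_jk S_kᵀ = [[0, λ_j V_jk],[λ_k V_jk, c_jk]]` with `λ_j > 0` and `V` symmetric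
(i.e. the transformed state is a valid Gaussian graph state with diagonal `U`),
then `det σ_jk ≤ 0` for all `j ≠ k`. -/
theorem det_nonpos_of_GLU_equiv_graphState {N : ℕ}
    (Sig : Matrix (Fin N ⊕ Fin N) (Fin N ⊕ Fin N) ℝ)
    (S : Fin N → Matrix (Fin 2) (Fin 2) ℝ) (hS : ∀ j, (S j).det = 1)
    (lam : Fin N → ℝ) (hlam : ∀ j, 0 < lam j)
    (V : Matrix (Fin N) (Fin N) ℝ) (hV : V.IsSymm)
    (c : Fin N → Fin N → ℝ)
    (h : ∀ j k, j ≠ k →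
      S j * modeBlock Sig j k * (S k)ᵀ
        = !![0, lam j * V j k; lam k * V j k, c j k]) :
    ∀ j k, j ≠ k → (modeBlock Sig j k).det ≤ 0 := by
  intro j k hjk
  have hd : (modeBlock Sig j k).det
      = (!![0, lam j * V j k; lam k * V j k, c j k] : Matrix (Fin 2) (Fin 2) ℝ).det := by
    rw [← h j k hjk, det_mul, det_mul, det_transpose, hS j, hS k]
    ring
  rw [hd, det_fin_two_of]
  have h1 := (hlam j).le
  have h2 := (hlam k).le
  nlinarith [mul_nonneg (mul_nonneg h1 h2) (sq_nonneg (V j k))]
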